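/- Let A be an integral domain and p a prime ideal of A. Then p is a straight prime ideal of A if and only if p is a locally divided prime ideal of A. -/

import Mathlib

/-- The subset `p·A_m = {x/y : x ∈ p, y ∈ A \ m}` of the ambient field `F`. -/
def locSet {F : Type*} [Field F] (A : Subring F) (p m : Ideal A) : Set F :=
  {z | ∃ x : ↥A, x ∈ p ∧ ∃ y : ↥A, y ∉ m ∧ z = (x : F) / (y : F)}

/-- `A` is straight at the prime ideal `p`: for every overring `B` of `A`
(subring of the fraction field `F` of `A` containing `A`), the `A/p`-module `B/pB`
is torsion-free, stated elementwise: for `a ∈ A \ p` and `b ∈ B`,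
if `a·b ∈ pB` then `b ∈ pB`. -/
def IsStraightAt {F : Type*} [Field F] (A : Subring F) (p : Ideal A) : Prop :=
  ∀ (B : Subring F) (hAB : A ≤ B), ∀ a : ↥A, a ∉ p → ∀ b : ↥B,
    Subring.inclusion hAB a * b ∈ p.map (Subring.inclusion hAB) →
    b ∈ p.map (Subring.inclusion hAB)

/-- `p` is a locally divided prime ideal of `A`: `p·A_m = p·A_p` (as subsets of the
fraction field) for every maximal ideal `m` containing `p`. -/
def IsLocallyDividedAt {F : Type*} [Field F] (A : Subring F) (p : Ideal A) : Prop :=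
  ∀ m : Ideal A, m.IsMaximal → p ≤ m → locSet A p m = locSet A p p

/-- The localization `A_m` of `A` at the prime ideal `m`, realized as the subring
`{x/y : x ∈ A, y ∈ A \ m}` of the fraction field of `A`. -/
def locSubring {F : Type*} [Field F] (A : Subring F) (m : Ideal A) (hm : m.IsPrime) :
    Subring F where
  carrier := {z | ∃ x y : ↥A, y ∉ m ∧ z = (x : F) / (y : F)}
  zero_mem' := ⟨0, 1, fun h => hm.ne_top (m.eq_top_of_isUnit_mem h isUnit_one), by simp⟩
  one_mem' := ⟨1, 1, fun h => hm.ne_top (m.eq_top_of_isUnit_mem h isUnit_one), by simp⟩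
  add_mem' := by
    rintro a b ⟨x1, y1, hy1, rfl⟩ ⟨x2, y2, hy2, rfl⟩
    refine ⟨x1 * y2 + x2 * y1, y1 * y2, fun h => (hm.mem_or_mem h).elim hy1 hy2, ?_⟩
    have h1 : (y1 : F) ≠ 0 := fun h =>
      hy1 (by rw [show y1 = 0 from Subtype.ext h]; exact m.zero_mem)
    have h2 : (y2 : F) ≠ 0 := fun h =>
      hy2 (by rw [show y2 = 0 from Subtype.ext h]; exact m.zero_mem)
    push_cast
    field_simp
  mul_mem' := by
    rintro a b ⟨x1, y1, hy1, rfl⟩ ⟨x2, y2, hy2, rfl⟩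
    refine ⟨x1 * x2, y1 * y2, fun h => (hm.mem_or_mem h).elim hy1 hy2, ?_⟩
    push_cast
    rw [div_mul_div_comm]
  neg_mem' := by
    rintro a ⟨x, y, hy, rfl⟩
    exact ⟨-x, y, hy, by push_cast; rw [neg_div]⟩


namespace Straight7


open Finset

variable {K : Type*} [Field K]

theorem coe_ne_zero_of_not_mem {A : Subring K} {I : Ideal A} {y : ↥A} (hy : y ∉ I) :
    (y : K) ≠ 0 := fun h => hy (by rw [show y = (0 : ↥A) from Subtype.ext h]; exact I.zero_mem)

theorem one_not_mem_of_ne_top {A : Subring K} {m : Ideal A} (hm : m ≠ ⊤) : (1 : ↥A) ∉ m :=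
  fun h => hm (m.eq_top_of_isUnit_mem h isUnit_one)

section qset

variable {A : Subring K} {p m : Ideal A}

theorem locSet_zero_mem (hmt : m ≠ ⊤) : (0 : K) ∈ locSet A p m :=
  ⟨0, p.zero_mem, 1, one_not_mem_of_ne_top hmt, by simp⟩

theorem locSet_coe_mem (hmt : m ≠ ⊤) {u : ↥A} (hu : u ∈ p) : (u : K) ∈ locSet A p m :=
  ⟨u, hu, 1, one_not_mem_of_ne_top hmt, by simp⟩

theorem locSet_add_mem (hmp : m.IsPrime) {a b : K} (ha : a ∈ locSet A p m)
    (hb : b ∈ locSet A p m) : a + b ∈ locSet A p m := by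
  obtain ⟨x1, hx1, y1, hy1, rfl⟩ := ha
  obtain ⟨x2, hx2, y2, hy2, rfl⟩ := hb
  refine ⟨x1 * y2 + x2 * y1, ?_, y1 * y2, fun h => (hmp.mem_or_mem h).elim hy1 hy2, ?_⟩
  · exact p.add_mem (p.mul_mem_right _ hx1) (p.mul_mem_right _ hx2)
  · have h1 : (y1 : K) ≠ 0 := coe_ne_zero_of_not_mem hy1
    have h2 : (y2 : K) ≠ 0 := coe_ne_zero_of_not_mem hy2
    push_cast
    field_simp

theorem locSet_neg_mem {a : K} (ha : a ∈ locSet A p m) : -a ∈ locSet A p m := by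
  obtain ⟨x, hx, y, hy, rfl⟩ := ha
  exact ⟨-x, p.neg_mem hx, y, hy, by push_cast; rw [neg_div]⟩

theorem locSet_mul_mem (hmp : m.IsPrime) {a b : K} (ha : a ∈ locSet A p m)
    (hb : b ∈ locSet A p m) : a * b ∈ locSet A p m := by
  obtain ⟨x1, hx1, y1, hy1, rfl⟩ := ha
  obtain ⟨x2, hx2, y2, hy2, rfl⟩ := hb
  refine ⟨x1 * x2, p.mul_mem_right _ hx1, y1 * y2,
    fun h => (hmp.mem_or_mem h).elim hy1 hy2, by push_cast; rw [div_mul_div_comm]⟩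

/-- multiplication by an element of `A_m` preserves `locSet A p m`. -/
theorem locSet_smul_mem (hmp : m.IsPrime) {r : K}
    (hr : ∃ a t : ↥A, t ∉ m ∧ r = (a : K) / (t : K))
    {b : K} (hb : b ∈ locSet A p m) : r * b ∈ locSet A p m := by
  obtain ⟨a, t, ht, rfl⟩ := hr
  obtain ⟨x, hx, y, hy, rfl⟩ := hb
  refine ⟨a * x, p.mul_mem_left _ hx, t * y,
    fun h => (hmp.mem_or_mem h).elim ht hy, by push_cast; rw [div_mul_div_comm]⟩

theorem locSet_one_not_mem (hpm : p ≤ m) : (1 : K) ∉ locSet A p m := by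
  rintro ⟨x, hx, y, hy, h⟩
  have hy0 : (y : K) ≠ 0 := coe_ne_zero_of_not_mem hy
  field_simp at h
  exact hy (hpm ((Subtype.ext h : y = x) ▸ hx))

theorem locSet_one_sub_rep (hpm : p ≤ m) {e : K} (he : e ∈ locSet A p m) :
    ∃ a t : ↥A, t ∉ m ∧ a ∉ m ∧ (1 : K) - e = (a : K) / (t : K) := by
  obtain ⟨x, hx, y, hy, rfl⟩ := he
  have hy0 : (y : K) ≠ 0 := coe_ne_zero_of_not_mem hy
  have hxy : y - x ∉ m := fun h => hy (by
    have : y = (y - x) + x := by ring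
    rw [this]; exact m.add_mem h (hpm hx))
  exact ⟨y - x, y, hy, hxy, by push_cast; field_simp⟩

theorem locSet_one_sub_ne (hpm : p ≤ m) {e : K} (he : e ∈ locSet A p m) :
    (1 : K) - e ≠ 0 := by
  obtain ⟨a, t, ht, ha, h⟩ := locSet_one_sub_rep hpm he
  rw [h]
  exact div_ne_zero (coe_ne_zero_of_not_mem ha) (coe_ne_zero_of_not_mem ht)

theorem locSet_inv_smul_mem (hmp : m.IsPrime) (hpm : p ≤ m) {e : K}
    (he : e ∈ locSet A p m) {b : K} (hb : b ∈ locSet A p m) :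
    ((1 : K) - e)⁻¹ * b ∈ locSet A p m := by
  obtain ⟨a, t, ht, ha, h⟩ := locSet_one_sub_rep hpm he
  rw [h, inv_div]
  exact locSet_smul_mem hmp ⟨t, a, ha, rfl⟩ hb

end qset



/-- `t` is a finite sum `∑ g c * w^c` with all coefficients in the set `q`. -/
def polyRep (q : Set K) (w t : K) : Prop :=
  ∃ (N : ℕ) (g : ℕ → K), (∀ c, g c ∈ q) ∧ t = ∑ c ∈ Finset.range N, g c * w ^ c

/-- A set of "coefficients": contains 0, closed under + and neg. -/
structure GoodSet (q : Set K) : Prop where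
  zero : (0 : K) ∈ q
  add : ∀ a ∈ q, ∀ b ∈ q, a + b ∈ q
  neg : ∀ a ∈ q, -a ∈ q

variable {q : Set K} {w : K}

theorem polyRep_zero (hq : GoodSet q) : polyRep q w 0 :=
  ⟨0, fun _ => 0, fun _ => hq.zero, by simp⟩

theorem polyRep_of_mem {t : K} (ht : t ∈ q) : polyRep q w t :=
  ⟨1, fun _ => t, fun _ => ht, by simp⟩

theorem polyRep_add (hq : GoodSet q) {t₁ t₂ : K} (h₁ : polyRep q w t₁)
    (h₂ : polyRep q w t₂) : polyRep q w (t₁ + t₂) := by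
  obtain ⟨N₁, g₁, hg₁, e₁⟩ := h₁
  obtain ⟨N₂, g₂, hg₂, e₂⟩ := h₂
  set N := max N₁ N₂ with hN
  have E : ∀ (N' : ℕ) (g : ℕ → K), N' ≤ N → (∑ c ∈ Finset.range N', g c * w ^ c) =
      ∑ c ∈ Finset.range N, (if c < N' then g c else 0) * w ^ c := by
    intro N' g hle
    calc ∑ c ∈ Finset.range N', g c * w ^ c
        = ∑ c ∈ Finset.range N', (if c < N' then g c else 0) * w ^ c :=
          Finset.sum_congr rfl fun c hc => by rw [if_pos (Finset.mem_range.mp hc)]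
      _ = ∑ c ∈ Finset.range N, (if c < N' then g c else 0) * w ^ c :=
          Finset.sum_subset (Finset.range_subset_range.mpr hle) fun c _ hc => by
            rw [if_neg fun hlt => hc (Finset.mem_range.mpr hlt), zero_mul]
  refine ⟨N, fun c => (if c < N₁ then g₁ c else 0) + (if c < N₂ then g₂ c else 0), ?_, ?_⟩
  · intro c
    refine hq.add _ ?_ _ ?_ <;> split <;> first | exact hg₁ c | exact hg₂ c | exact hq.zero
  · rw [e₁, e₂, E N₁ g₁ (le_max_left _ _), E N₂ g₂ (le_max_right _ _),
      ← Finset.sum_add_distrib]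
    exact Finset.sum_congr rfl fun c _ => by ring

theorem polyRep_neg (hq : GoodSet q) {t : K} (h : polyRep q w t) : polyRep q w (-t) := by
  obtain ⟨N, g, hg, e⟩ := h
  exact ⟨N, fun c => -g c, fun c => hq.neg _ (hg c), by
    rw [e, ← Finset.sum_neg_distrib]
    exact Finset.sum_congr rfl fun c _ => by ring⟩

theorem polyRep_smul {r : K} (hr : ∀ t ∈ q, r * t ∈ q) {t : K} (h : polyRep q w t) :
    polyRep q w (r * t) := by
  obtain ⟨N, g, hg, e⟩ := h
  exact ⟨N, fun c => r * g c, fun c => hr _ (hg c), by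
    rw [e, Finset.mul_sum]
    exact Finset.sum_congr rfl fun c _ => by ring⟩

theorem polyRep_wmul (hq : GoodSet q) {t : K} (h : polyRep q w t) :
    polyRep q w (w * t) := by
  obtain ⟨N, g, hg, e⟩ := h
  refine ⟨N + 1, fun c => if c = 0 then 0 else g (c - 1), ?_, ?_⟩
  · intro c; dsimp only; split; exacts [hq.zero, hg _]
  · rw [e, Finset.mul_sum, Finset.sum_range_succ']
    simp only [if_pos rfl, Nat.succ_ne_zero, if_false, if_neg (Nat.succ_ne_zero 0),
      Nat.add_sub_cancel, zero_mul, add_zero, reduceIte]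
    exact (Finset.sum_congr rfl fun c _ => by ring).symm

theorem polyRep_closure_mul (hq : GoodSet q) (G : Set K)
    (habs : ∀ r ∈ G, ∀ t ∈ q, r * t ∈ q) {b : K}
    (hb : b ∈ Subring.closure (G ∪ {w})) {t : K} (ht : polyRep q w t) :
    polyRep q w (b * t) := by
  induction hb using Subring.closure_induction generalizing t with
  | mem x hx =>
    rcases hx with hx | hx
    · exact polyRep_smul (habs x hx) ht
    · rw [Set.mem_singleton_iff.mp hx]
      exact polyRep_wmul hq ht
  | zero => rw [zero_mul]; exact polyRep_zero hq
  | one => rw [one_mul]; exact ht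
  | add x y hx hy ihx ihy => rw [add_mul]; exact polyRep_add hq (ihx ht) (ihy ht)
  | neg x hx ihx => rw [neg_mul]; exact polyRep_neg hq (ihx ht)
  | mul x y hx hy ihx ihy => rw [mul_assoc]; exact ihx (ihy ht)

theorem coe_mem_map_polyRep {A : Subring K} {p : Ideal A} (hq : GoodSet q) (G : Set K)
    (habs : ∀ r ∈ G, ∀ t ∈ q, r * t ∈ q)
    (hpq : ∀ u : ↥A, u ∈ p → (u : K) ∈ q)
    (hAB : A ≤ Subring.closure (G ∪ {w}))
    (b : ↥(Subring.closure (G ∪ {w})))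
    (hb : b ∈ p.map (Subring.inclusion hAB)) : polyRep q w (b : K) := by
  have hb' : b ∈ Ideal.span ((Subring.inclusion hAB) '' ↑p) := hb
  clear hb
  induction hb' using Submodule.span_induction with
  | mem x hx =>
    obtain ⟨u, hu, rfl⟩ := hx
    exact polyRep_of_mem (hpq u hu)
  | zero => exact polyRep_zero hq
  | add x y hx hy ihx ihy => push_cast; exact polyRep_add hq ihx ihy
  | smul a x hx ihx =>
    have : ((a • x : ↥(Subring.closure (G ∪ {w}))) : K) = (a : K) * (x : K) := by
      rw [smul_eq_mul]; push_cast; ring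
    rw [this]
    exact polyRep_closure_mul hq G habs a.2 ihx

/-- representation of fixed length `k`. -/
def fixRep (q : Set K) (z : K) (k : ℕ) (t : K) : Prop :=
  ∃ h : ℕ → K, (∀ i, h i ∈ q) ∧ t = ∑ i ∈ Finset.range k, h i * z ^ i

variable {q : Set K} {z : K}

theorem fixRep_add (hq : GoodSet q) {k : ℕ} {t₁ t₂ : K} (h₁ : fixRep q z k t₁)
    (h₂ : fixRep q z k t₂) : fixRep q z k (t₁ + t₂) := by
  obtain ⟨h, hh, e₁⟩ := h₁
  obtain ⟨h', hh', e₂⟩ := h₂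
  refine ⟨fun i => h i + h' i, fun i => hq.add _ (hh i) _ (hh' i), ?_⟩
  rw [e₁, e₂, ← Finset.sum_add_distrib]
  exact Finset.sum_congr rfl fun i _ => by ring

theorem fixRep_scal (hq : GoodSet q) (hqmul : ∀ a ∈ q, ∀ b ∈ q, a * b ∈ q)
    {k : ℕ} {e t : K} (he : e ∈ q) (h : fixRep q z k t) : fixRep q z k (e * t) := by
  obtain ⟨h', hh', e₂⟩ := h
  refine ⟨fun i => e * h' i, fun i => hqmul _ he _ (hh' i), ?_⟩
  rw [e₂, Finset.mul_sum]
  exact Finset.sum_congr rfl fun i _ => by ring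

theorem fixRep_mono (hq : GoodSet q) {k j : ℕ} (hj : j < k) {e : K} (he : e ∈ q) :
    fixRep q z k (e * z ^ j) := by
  refine ⟨fun i => if i = j then e else 0, fun i => by dsimp only; split; exacts [he, hq.zero], ?_⟩
  have : ∀ i ∈ Finset.range k, (if i = j then e else 0) * z ^ i
      = if i = j then e * z ^ j else 0 := by
    intro i _
    split
    · rename_i hij; rw [hij]
    · rw [zero_mul]
  rw [Finset.sum_congr rfl this, Finset.sum_ite_eq' (Finset.range k) j (fun _ => e * z ^ j),
    if_pos (Finset.mem_range.mpr hj)]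

theorem fixRep_zmul (hq : GoodSet q) (hqmul : ∀ a ∈ q, ∀ b ∈ q, a * b ∈ q) {k : ℕ}
    (hk : 1 ≤ k) (hmon : fixRep q z k (z ^ k)) {t : K} (h : fixRep q z k t) :
    fixRep q z k (z * t) := by
  obtain ⟨h', hh', e⟩ := h
  -- z * t = ∑_{i<k} h' i * z^(i+1) = (∑_{i<k-1} h' i z^(i+1)) + h' (k-1) * z^k
  have e2 : z * t = (∑ i ∈ Finset.range k, (if i = 0 then 0 else h' (i - 1)) * z ^ i)
      + h' (k - 1) * z ^ k := by
    rw [e, Finset.mul_sum]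
    obtain ⟨k', rfl⟩ : ∃ k', k = k' + 1 := ⟨k - 1, (Nat.succ_pred_eq_of_pos hk).symm⟩
    rw [Finset.sum_range_succ, Finset.sum_range_succ']
    simp only [if_pos rfl, Nat.succ_ne_zero, reduceIte, Nat.add_sub_cancel, zero_mul,
      add_zero, Nat.add_sub_cancel]
    congr 1
    · exact Finset.sum_congr rfl fun c _ => by ring
    · ring
  rw [e2]
  refine fixRep_add hq ⟨fun i => if i = 0 then 0 else h' (i - 1), fun i => ?_, rfl⟩ ?_
  · by_cases hi : i = 0 <;> simp [hi, hq.zero, hh' _]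
  · exact fixRep_scal hq hqmul (hh' _) hmon

theorem fixRep_zpow_mul (hq : GoodSet q) (hqmul : ∀ a ∈ q, ∀ b ∈ q, a * b ∈ q) {k : ℕ}
    (hk : 1 ≤ k) (hmon : fixRep q z k (z ^ k)) {t : K} (h : fixRep q z k t) (j : ℕ) :
    fixRep q z k (z ^ j * t) := by
  induction j with
  | zero => rw [pow_zero, one_mul]; exact h
  | succ n ih =>
    have : z ^ (n + 1) * t = z * (z ^ n * t) := by ring
    rw [this]
    exact fixRep_zmul hq hqmul hk hmon ih

theorem fixRep_anymono (hq : GoodSet q) (hqmul : ∀ a ∈ q, ∀ b ∈ q, a * b ∈ q) {k : ℕ}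
    (hk : 1 ≤ k) (hmon : fixRep q z k (z ^ k)) {e : K} (he : e ∈ q) (j : ℕ) :
    fixRep q z k (e * z ^ j) := by
  have h0 : fixRep q z k e := by
    have := fixRep_mono (z := z) hq hk he
    rwa [pow_zero, mul_one] at this
  have := fixRep_zpow_mul hq hqmul hk hmon h0 j
  rwa [mul_comm] at this

theorem fixRep_of_polyRep (hq : GoodSet q) (hqmul : ∀ a ∈ q, ∀ b ∈ q, a * b ∈ q) {k : ℕ}
    (hk : 1 ≤ k) (hmon : fixRep q z k (z ^ k)) {t : K} (h : polyRep q z t) :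
    fixRep q z k t := by
  obtain ⟨N, g, hg, e⟩ := h
  subst e
  induction N with
  | zero => exact ⟨fun _ => 0, fun _ => hq.zero, by simp⟩
  | succ n ih =>
    rw [Finset.sum_range_succ]
    exact fixRep_add hq ih (fixRep_anymono hq hqmul hk hmon (hg n) n)

/-- top-degree reduction: a length `k+1` representation of `z^k` gives a length `k` one. -/
theorem fixRep_top_reduce (hq : GoodSet q)
    (hq1 : (1 : K) ∉ q)
    (hsub : ∀ e ∈ q, (1 : K) - e ≠ 0)
    (hinv : ∀ e ∈ q, ∀ t ∈ q, ((1 : K) - e)⁻¹ * t ∈ q)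
    {k : ℕ} (h : fixRep q z (k + 1) (z ^ k)) : fixRep q z k (z ^ k) := by
  obtain ⟨h', hh', e⟩ := h
  rw [Finset.sum_range_succ] at e
  -- z^k = S + h' k * z^k  with  S = ∑_{i<k} h' i z^i
  have e2 : (1 - h' k) * z ^ k = ∑ i ∈ Finset.range k, h' i * z ^ i := by
    linear_combination e
  have hne := hsub _ (hh' k)
  refine ⟨fun i => (1 - h' k)⁻¹ * h' i, fun i => hinv _ (hh' k) _ (hh' i), ?_⟩
  have : z ^ k = (1 - h' k)⁻¹ * ((1 - h' k) * z ^ k) := by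
    field_simp
  rw [this, e2, Finset.mul_sum]
  exact Finset.sum_congr rfl fun i _ => by ring

theorem fixRep_len_zero {t : K} (h : fixRep q z 0 t) : t = 0 := by
  obtain ⟨h', _, e⟩ := h
  simpa using e

/-- Main endgame: from the two straightness-derived relations, `z ∈ q`. -/
theorem endgame (hq : GoodSet q) (hqmul : ∀ a ∈ q, ∀ b ∈ q, a * b ∈ q)
    (hq1 : (1 : K) ∉ q)
    (hsub : ∀ e ∈ q, (1 : K) - e ≠ 0)
    (hinv : ∀ e ∈ q, ∀ t ∈ q, ((1 : K) - e)⁻¹ * t ∈ q)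
    (hz : z ≠ 0)
    (rel1 : polyRep q z⁻¹ 1) (rel2 : polyRep q z z) : z ∈ q := by
  -- step 1: produce k ≥ 1 and a monic relation fixRep q z k (z^k)
  obtain ⟨N, g, hg, e⟩ := rel1
  -- N ≠ 0
  rcases Nat.eq_zero_or_pos N with hN | hN
  · subst hN; simp at e
  obtain ⟨k, rfl⟩ : ∃ k, N = k + 1 := ⟨N - 1, (Nat.succ_pred_eq_of_pos hN).symm⟩
  -- z^k = ∑_{c < k+1} g c * z^(k-c)
  have epow : z ^ k = ∑ c ∈ Finset.range (k + 1), g c * z ^ (k - c) := by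
    calc z ^ k = (∑ c ∈ Finset.range (k + 1), g c * z⁻¹ ^ c) * z ^ k := by
          rw [← e, one_mul]
      _ = ∑ c ∈ Finset.range (k + 1), g c * z ^ (k - c) := by
          rw [Finset.sum_mul]
          refine Finset.sum_congr rfl fun c hc => ?_
          have hck : c ≤ k := Nat.lt_succ_iff.mp (Finset.mem_range.mp hc)
          have : z ^ k = z ^ (k - c) * z ^ c := by
            rw [← pow_add, Nat.sub_add_cancel hck]
          rw [mul_assoc, this, mul_comm (z ^ (k - c)) (z ^ c), ← mul_assoc (z⁻¹ ^ c),
            ← mul_pow, inv_mul_cancel₀ hz, one_pow, one_mul]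
  -- reflect the sum: fixRep q z (k+1) (z^k)
  have hrep : fixRep q z (k + 1) (z ^ k) := by
    refine ⟨fun i => g (k - i), fun i => hg _, ?_⟩
    rw [epow, ← Finset.sum_range_reflect]
    refine Finset.sum_congr rfl fun j hj => ?_
    have hjk : j ≤ k := Nat.lt_succ_iff.mp (Finset.mem_range.mp hj)
    have h1 : k + 1 - 1 - j = k - j := by omega
    have h2 : k - (k - j) = j := by omega
    rw [h1, h2]
  have hmon : fixRep q z k (z ^ k) := fixRep_top_reduce hq hq1 hsub hinv hrep
  -- k ≥ 1, else 1 ∈ q-contradiction via fixRep 0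
  rcases Nat.eq_zero_or_pos k with hk | hk
  · subst hk
    have := fixRep_len_zero hmon
    rw [pow_zero] at this
    exact absurd this one_ne_zero
  -- main descending induction
  clear e epow hrep hg g
  -- statement: for all k ≥ 1 with a monic relation, z ∈ q
  have main : ∀ n : ℕ, ∀ k : ℕ, k = n + 1 → fixRep q z k (z ^ k) → z ∈ q := by
    intro n
    induction n with
    | zero =>
      rintro k rfl hmon
      have hz1 : fixRep q z 1 z := fixRep_of_polyRep hq hqmul le_rfl hmon rel2
      obtain ⟨h, hh, e⟩ := hz1
      rw [Finset.sum_range_one, pow_zero, mul_one] at e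
      rw [e]; exact hh 0
    | succ n ih =>
      rintro k rfl hmon
      have hk1 : 1 ≤ n + 1 + 1 := by omega
      have hzfix : fixRep q z (n + 2) z := fixRep_of_polyRep hq hqmul hk1 hmon rel2
      -- z^(n+1) = z^n * z ∈ fixRep (n+2)
      have hpow : fixRep q z (n + 2) (z ^ (n + 1)) := by
        have := fixRep_zpow_mul hq hqmul hk1 hmon hzfix n
        rwa [show z ^ n * z = z ^ (n + 1) by ring] at this
      have hmon' : fixRep q z (n + 1) (z ^ (n + 1)) :=
        fixRep_top_reduce hq hq1 hsub hinv hpow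
      exact ih (n + 1) rfl hmon'
  obtain ⟨k', rfl⟩ : ∃ k', k = k' + 1 := ⟨k - 1, (Nat.succ_pred_eq_of_pos hk).symm⟩
  exact main k' (k' + 1) rfl hmon


section Main

variable {K : Type*} [Field K]

theorem forward {A : Subring K} {p : Ideal A} (hS : IsStraightAt A p) :
    IsLocallyDividedAt A p := by
  intro m hm hpm
  have hmp : m.IsPrime := hm.isPrime
  have hmt : m ≠ ⊤ := hm.ne_top
  apply Set.Subset.antisymm
  · rintro t ⟨x, hx, y, hy, rfl⟩
    exact ⟨x, hx, y, fun h => hy (hpm h), rfl⟩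
  · rintro t ⟨x, hx, y, hy, rfl⟩
    by_cases hx0 : (x : K) = 0
    · rw [hx0, zero_div]; exact locSet_zero_mem hmt
    have hy0 : (y : K) ≠ 0 := coe_ne_zero_of_not_mem hy
    set z : K := (x : K) / (y : K) with hzdef
    clear_value z
    have hz : z ≠ 0 := hzdef ▸ div_ne_zero hx0 hy0
    have hq : GoodSet (locSet A p m) := ⟨locSet_zero_mem hmt,
      fun a ha b hb => locSet_add_mem hmp ha hb, fun a ha => locSet_neg_mem ha⟩
    have hqmul : ∀ a ∈ locSet A p m, ∀ b ∈ locSet A p m, a * b ∈ locSet A p m :=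
      fun a ha b hb => locSet_mul_mem hmp ha hb
    have hq1 : (1 : K) ∉ locSet A p m := locSet_one_not_mem hpm
    have hsub : ∀ e ∈ locSet A p m, (1 : K) - e ≠ 0 := fun e he => locSet_one_sub_ne hpm he
    have hinv : ∀ e ∈ locSet A p m, ∀ t ∈ locSet A p m,
        ((1 : K) - e)⁻¹ * t ∈ locSet A p m :=
      fun e he t ht => locSet_inv_smul_mem hmp hpm he ht
    have hpq : ∀ u : ↥A, u ∈ p → (u : K) ∈ locSet A p m := fun u hu => locSet_coe_mem hmt hu
    -- first relation, via the overring A[y/x]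
    have rel1 : polyRep (locSet A p m) z⁻¹ (1 : K) := by
      have hw' : z⁻¹ = (y : K) / (x : K) := by rw [hzdef, inv_div]
      have hAB : A ≤ Subring.closure ((A : Set K) ∪ {z⁻¹}) := fun u hu =>
        Subring.subset_closure (Or.inl hu)
      have hwB : z⁻¹ ∈ Subring.closure ((A : Set K) ∪ {z⁻¹}) :=
        Subring.subset_closure (Or.inr rfl)
      have key : (1 : ↥(Subring.closure ((A : Set K) ∪ {z⁻¹}))) ∈
          p.map (Subring.inclusion hAB) := by
        refine hS _ hAB y hy 1 ?_
        have heq : Subring.inclusion hAB y * 1 =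
            Subring.inclusion hAB x * ⟨z⁻¹, hwB⟩ := by
          apply Subtype.ext
          show (y : K) * 1 = (x : K) * z⁻¹
          rw [hw']
          field_simp
        rw [heq]
        exact Ideal.mul_mem_right _ _ (Ideal.mem_map_of_mem _ hx)
      have habs : ∀ r ∈ (A : Set K), ∀ t ∈ locSet A p m, r * t ∈ locSet A p m := by
        intro r hr t ht
        exact locSet_smul_mem hmp ⟨⟨r, hr⟩, 1, one_not_mem_of_ne_top hmt, by simp⟩ ht
      have := coe_mem_map_polyRep hq _ habs hpq hAB 1 key
      simpa using this
    -- second relation, via the overring A_m[z]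
    have rel2 : polyRep (locSet A p m) z z := by
      have hAR : (A : Set K) ⊆ ((locSubring A m hmp : Subring K) : Set K) := by
        intro u hu
        exact ⟨⟨u, hu⟩, 1, one_not_mem_of_ne_top hmt, by simp⟩
      have hAB : A ≤ Subring.closure (((locSubring A m hmp : Subring K) : Set K) ∪ {z}) :=
        fun u hu => Subring.subset_closure (Or.inl (hAR hu))
      have hzB : z ∈ Subring.closure (((locSubring A m hmp : Subring K) : Set K) ∪ {z}) :=
        Subring.subset_closure (Or.inr rfl)
      have key : (⟨z, hzB⟩ : ↥(Subring.closure
            (((locSubring A m hmp : Subring K) : Set K) ∪ {z}))) ∈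
          p.map (Subring.inclusion hAB) := by
        refine hS _ hAB y hy _ ?_
        have heq : Subring.inclusion hAB y * ⟨z, hzB⟩ = Subring.inclusion hAB x := by
          apply Subtype.ext
          show (y : K) * z = (x : K)
          rw [hzdef]
          field_simp
        rw [heq]
        exact Ideal.mem_map_of_mem _ hx
      have habs : ∀ r ∈ ((locSubring A m hmp : Subring K) : Set K),
          ∀ t ∈ locSet A p m, r * t ∈ locSet A p m := by
        rintro r ⟨a, t', ht', rfl⟩ u hu
        exact locSet_smul_mem hmp ⟨a, t', ht', rfl⟩ hu
      exact coe_mem_map_polyRep hq _ habs hpq hAB _ key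
    exact endgame hq hqmul hq1 hsub hinv hz rel1 rel2

theorem backward {A : Subring K} {p : Ideal A} (hL : IsLocallyDividedAt A p) :
    IsStraightAt A p := by
  intro B hAB a ha b hab
  by_contra hb
  have hJ : (p.map (Subring.inclusion hAB)).colon (Ideal.span {b}) ≠ ⊤ := by
    intro h
    have h1 : (1 : ↥B) ∈ (p.map (Subring.inclusion hAB)).colon (Ideal.span {b}) :=
      h ▸ Submodule.mem_top
    rw [Ideal.mem_colon_span_singleton, one_mul] at h1
    exact hb h1
  obtain ⟨n, hn, hJn⟩ := Ideal.exists_le_maximal _ hJ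
  have hpn : ∀ u : ↥A, u ∈ p → Subring.inclusion hAB u ∈ n := by
    intro u hu
    refine hJn ?_
    rw [Ideal.mem_colon_span_singleton]
    exact Ideal.mul_mem_right _ _ (Ideal.mem_map_of_mem _ hu)
  have hm'top : n.comap (Subring.inclusion hAB) ≠ ⊤ := by
    intro h
    have h1 : (1 : ↥A) ∈ n.comap (Subring.inclusion hAB) := h ▸ Submodule.mem_top
    rw [Ideal.mem_comap, map_one] at h1
    exact hn.ne_top (n.eq_top_of_isUnit_mem h1 isUnit_one)
  obtain ⟨m, hm, hm'm⟩ := Ideal.exists_le_maximal _ hm'top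
  have hpm : p ≤ m := fun u hu => hm'm (by rw [Ideal.mem_comap]; exact hpn u hu)
  have ha0 : (a : K) ≠ 0 := coe_ne_zero_of_not_mem ha
  -- decompose a • b over the generators
  have hab' : (Subring.inclusion hAB a * b) ∈
      Submodule.span ↥B ((Subring.inclusion hAB) '' ↑p) := hab
  rw [Submodule.mem_span_set'] at hab'
  obtain ⟨nn, f, g, hsum⟩ := hab'
  have hgi : ∀ i, ∃ u : ↥A, u ∈ p ∧ Subring.inclusion hAB u = (g i : ↥B) := by
    intro i
    obtain ⟨u, hu, he⟩ := (g i).2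
    exact ⟨u, hu, he⟩
  choose π hπp hπe using hgi
  have hrep : ∀ i, ∃ x' : ↥A, x' ∈ p ∧ ∃ s : ↥A, s ∉ m ∧
      (π i : K) / (a : K) = (x' : K) / (s : K) := by
    intro i
    have h1 : ((π i : K) / (a : K)) ∈ locSet A p p := ⟨π i, hπp i, a, ha, rfl⟩
    rw [← hL m hm hpm] at h1
    exact h1
  choose x' hx'p s hs hxs using hrep
  have hcross : ∀ i, π i * s i = a * x' i := by
    intro i
    have hs0 : (s i : K) ≠ 0 := coe_ne_zero_of_not_mem (hs i)
    have h1 := hxs i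
    apply Subtype.ext
    push_cast
    field_simp at h1
    linear_combination h1
  -- the product of the denominators
  have hSm : (∏ i, s i) ∉ m := by
    intro hSm
    obtain ⟨i, _, hi⟩ := (Ideal.IsPrime.prod_mem_iff (hp := hm.isPrime)).mp hSm
    exact hs i hi
  -- claim : (∏ s i) • b ∈ pB
  have hterm : ∀ i, (∏ j, s j) * π i =
      a * ((∏ j ∈ Finset.univ.erase i, s j) * x' i) := by
    intro i
    have hP : (∏ j, s j) = s i * ∏ j ∈ Finset.univ.erase i, s j :=
      (Finset.mul_prod_erase _ _ (Finset.mem_univ i)).symm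
    calc (∏ j, s j) * π i = (π i * s i) * ∏ j ∈ Finset.univ.erase i, s j := by
          rw [hP]; ring
      _ = a * ((∏ j ∈ Finset.univ.erase i, s j) * x' i) := by rw [hcross i]; ring
  have hBval : ∀ c : ↥B, (c : K) = B.subtype c := fun _ => rfl
  have hc1 : ((Subring.inclusion hAB a * b : ↥B) : K) = ∑ i, (f i : K) * (π i : K) := by
    rw [← hsum]
    push_cast [hBval, map_sum]
    refine Finset.sum_congr rfl fun i _ => ?_
    rw [smul_eq_mul]
    push_cast
    rw [← hπe i]
    rfl
  have hc1' : (a : K) * (b : K) = ∑ i, (f i : K) * (π i : K) := hc1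
  have hco : ((Subring.inclusion hAB (∏ i, s i) : ↥B) : K) * (b : K) =
      ∑ i, (f i : K) * (((∏ j ∈ Finset.univ.erase i, s j) * x' i : ↥A) : K) := by
    apply mul_left_cancel₀ ha0
    have h1 : ((Subring.inclusion hAB (∏ i, s i) : ↥B) : K) = ((∏ i, s i : ↥A) : K) := rfl
    rw [h1]
    calc (a : K) * (((∏ i, s i : ↥A) : K) * (b : K))
        = ((∏ i, s i : ↥A) : K) * ((a : K) * (b : K)) := by ring
      _ = ((∏ i, s i : ↥A) : K) * ∑ i, (f i : K) * (π i : K) := by rw [hc1']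
      _ = ∑ i, (f i : K) * (((∏ j, s j) * π i : ↥A) : K) := by
          rw [Finset.mul_sum]
          refine Finset.sum_congr rfl fun i _ => by push_cast; ring
      _ = (a : K) * ∑ i, (f i : K) *
            (((∏ j ∈ Finset.univ.erase i, s j) * x' i : ↥A) : K) := by
          rw [Finset.mul_sum]
          refine Finset.sum_congr rfl fun i _ => ?_
          rw [hterm i]
          push_cast
          ring
  have hE : ((∑ i, f i * Subring.inclusion hAB ((∏ j ∈ Finset.univ.erase i, s j) * x' i)
        : ↥B) : K) =
      ∑ i, (f i : K) * (((∏ j ∈ Finset.univ.erase i, s j) * x' i : ↥A) : K) := by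
    rw [hBval, map_sum]
    exact Finset.sum_congr rfl fun i _ => rfl
  have hkey : Subring.inclusion hAB (∏ i, s i) * b ∈ p.map (Subring.inclusion hAB) := by
    have heq : Subring.inclusion hAB (∏ i, s i) * b =
        ∑ i, f i * Subring.inclusion hAB ((∏ j ∈ Finset.univ.erase i, s j) * x' i) := by
      apply Subtype.ext
      rw [hE]
      exact hco
    rw [heq]
    refine Submodule.sum_mem _ fun i _ => ?_
    exact Ideal.mul_mem_left _ _ (Ideal.mem_map_of_mem _ (p.mul_mem_left _ (hx'p i)))
  have : Subring.inclusion hAB (∏ i, s i) ∈ n := hJn (by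
    rw [Ideal.mem_colon_span_singleton]; exact hkey)
  exact hSm (hm'm (by rw [Ideal.mem_comap]; exact this))

end Main

end Straight7

/-- A prime ideal `p` of a domain `A` (with fraction field `K`) is straight iff
it is locally divided. -/
theorem stmt7 {K : Type*} [Field K] (A : Subring K) [IsFractionRing ↥A K]
    (p : Ideal A) [p.IsPrime] :
    IsStraightAt A p ↔ IsLocallyDividedAt A p :=
  ⟨fun h => Straight7.forward h, fun h => Straight7.backward h⟩
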